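/- Taking a depth-1 minor of a depth-1 minor iteratively r times yields a depth-((3^r − 1)/2) minor of the original graph G. That is, if H₁ is a depth-1 minor of G and inductively H_{k+1} is a depth-1 minor of H_k, then H_r is a depth-((3^r − 1)/2) minor of G. -/

import Mathlib

/-- `H` is a depth-`r` minor of `G`: there are pairwise vertex-disjoint connected subgraphs of
`G` of radius at most `r` (each branch set has a center from which every vertex of the branch
set is reachable within distance `r` inside the branch set), one per vertex of `H`, such that
adjacent vertices of `H` have an edge of `G` between their branch sets. -/
def IsDepthMinor {V W : Type} (G : SimpleGraph V) (H : SimpleGraph W) (r : ℕ) : Prop :=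
  ∃ B : W → Set V,
    (∀ w, ∃ c : B w, ∀ v : B w,
      (G.induce (B w)).Reachable c v ∧ (G.induce (B w)).dist c v ≤ r) ∧
    (Pairwise fun w₁ w₂ => Disjoint (B w₁) (B w₂)) ∧
    ∀ ⦃w₁ w₂⦄, H.Adj w₁ w₂ → ∃ v₁ ∈ B w₁, ∃ v₂ ∈ B w₂, G.Adj v₁ v₂

lemma exists_walk_le {V : Type} {G : SimpleGraph V} {s : Set V} {r : ℕ}
    {c v : s} (h : (G.induce s).Reachable c v ∧ (G.induce s).dist c v ≤ r) :
    ∃ p : (G.induce s).Walk c v, p.length ≤ r := by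
  obtain ⟨p, hp⟩ := h.1.exists_walk_length_eq_dist
  exact ⟨p, hp ▸ h.2⟩

lemma eq_or_adj_of_walk_length_le_one {V : Type} {G : SimpleGraph V} {u v : V}
    (p : G.Walk u v) (h : p.length ≤ 1) : u = v ∨ G.Adj u v := by
  cases p with
  | nil => exact Or.inl rfl
  | cons h' q =>
    simp only [SimpleGraph.Walk.length_cons] at h
    have hbv := SimpleGraph.Walk.eq_of_length_eq_zero (p := q) (by omega)
    exact Or.inr (hbv ▸ h')

lemma reach_of_walk {V : Type} {G : SimpleGraph V} {r : ℕ} {c v : V}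
    (p : G.Walk c v) (h : p.length ≤ r) : G.Reachable c v ∧ G.dist c v ≤ r :=
  ⟨p.reachable, le_trans (SimpleGraph.dist_le p) h⟩

lemma length_map_append_cons_aux {V V1 V2 : Type} {G : SimpleGraph V} {G1 : SimpleGraph V1}
    {G2 : SimpleGraph V2} (f1 : G1 →g G) (f2 : G2 →g G) {a b : V1} {c d e : V2}
    (p₁ : G1.Walk a b) (p₂ : G2.Walk c d) (p₃ : G2.Walk c e) (h : G.Adj (f1 b) (f2 d)) :
    ((p₁.map f1).append (SimpleGraph.Walk.cons h ((p₂.reverse.append p₃).map f2))).length =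
      p₁.length + p₂.length + p₃.length + 1 := by
  simp only [SimpleGraph.Walk.length_append, SimpleGraph.Walk.length_cons,
    SimpleGraph.Walk.length_map, SimpleGraph.Walk.length_reverse]
  omega

lemma IsDepthMinor.comp {V W X : Type} {G : SimpleGraph V} {H : SimpleGraph W}
    {K : SimpleGraph X} {s : ℕ} (hGH : IsDepthMinor G H s) (hHK : IsDepthMinor H K 1) :
    IsDepthMinor G K (3 * s + 1) := by
  obtain ⟨B, hBc, hBd, hBe⟩ := hGH
  obtain ⟨C, hCc, hCd, hCe⟩ := hHK
  refine ⟨fun x => ⋃ w ∈ C x, B w, ?_, ?_, ?_⟩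
  · intro x
    obtain ⟨w₀, hcen⟩ := hCc x
    obtain ⟨c₀, hc₀⟩ := hBc w₀.1
    have hc₀mem : (c₀ : V) ∈ ⋃ w ∈ C x, B w := Set.mem_biUnion w₀.2 c₀.2
    refine ⟨⟨c₀, hc₀mem⟩, ?_⟩
    rintro ⟨v, hv⟩
    obtain ⟨w, hwC, hvB⟩ := Set.mem_iUnion₂.mp hv
    have hsub : ∀ w' ∈ C x, B w' ⊆ ⋃ w ∈ C x, B w := fun w' hw' => Set.subset_biUnion_of_mem hw'
    obtain ⟨q, hq⟩ := exists_walk_le (hcen ⟨w, hwC⟩)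
    rcases eq_or_adj_of_walk_length_le_one q hq with heq | hadj
    · have hw₀ : w₀.1 = w := congrArg Subtype.val heq
      subst hw₀
      obtain ⟨p, hp⟩ := exists_walk_le (hc₀ ⟨v, hvB⟩)
      exact reach_of_walk (p.map (G.induceHomOfLE (hsub w₀.1 w₀.2)).toHom)
        (by exact le_trans (le_of_eq (SimpleGraph.Walk.length_map (G.induceHomOfLE (hsub w₀.1 w₀.2)).toHom p)) (by omega))
    · have hadj' : H.Adj w₀.1 w := hadj
      obtain ⟨u₀, hu₀, u₁, hu₁, huadj⟩ := hBe hadj'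
      obtain ⟨c₁, hc₁⟩ := hBc w
      obtain ⟨p₁, hp₁⟩ := exists_walk_le (hc₀ ⟨u₀, hu₀⟩)
      obtain ⟨p₂, hp₂⟩ := exists_walk_le (hc₁ ⟨u₁, hu₁⟩)
      obtain ⟨p₃, hp₃⟩ := exists_walk_le (hc₁ ⟨v, hvB⟩)
      have hedge : (G.induce (⋃ w ∈ C x, B w)).Adj ⟨u₀, hsub w₀.1 w₀.2 hu₀⟩ ⟨u₁, hsub w hwC hu₁⟩ := huadj
      exact reach_of_walk ((p₁.map (G.induceHomOfLE (hsub w₀.1 w₀.2)).toHom).append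
          (SimpleGraph.Walk.cons hedge
            ((p₂.reverse.append p₃).map (G.induceHomOfLE (hsub w hwC)).toHom)))
        (by exact le_trans (le_of_eq (length_map_append_cons_aux _ _ p₁ p₂ p₃ hedge)) (by omega))
  · intro x₁ x₂ hx
    rw [Set.disjoint_left]
    rintro a ha₁ ha₂
    obtain ⟨w₁, hw₁, haB₁⟩ := Set.mem_iUnion₂.mp ha₁
    obtain ⟨w₂, hw₂, haB₂⟩ := Set.mem_iUnion₂.mp ha₂
    have hne : w₁ ≠ w₂ := by
      rintro rfl
      exact Set.disjoint_left.mp (hCd hx) hw₁ hw₂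
    exact Set.disjoint_left.mp (hBd hne) haB₁ haB₂
  · intro x₁ x₂ hx
    obtain ⟨w₁, hw₁, w₂, hw₂, hadj⟩ := hCe hx
    obtain ⟨v₁, hv₁, v₂, hv₂, hadj'⟩ := hBe hadj
    exact ⟨v₁, Set.mem_biUnion hw₁ hv₁, v₂, Set.mem_biUnion hw₂ hv₂, hadj'⟩

lemma IsDepthMinor.refl {V : Type} (G : SimpleGraph V) : IsDepthMinor G G 0 := by
  refine ⟨fun w => {w}, ?_, ?_, ?_⟩
  · intro w
    refine ⟨⟨w, rfl⟩, ?_⟩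
    rintro ⟨a, ha⟩
    obtain rfl : a = w := ha
    exact ⟨SimpleGraph.Reachable.refl _, by simp [SimpleGraph.dist_self]⟩
  · exact fun w₁ w₂ h => Set.disjoint_singleton.mpr h
  · exact fun w₁ w₂ h => ⟨w₁, rfl, w₂, rfl, h⟩

/-- Taking a depth-1 minor of a depth-1 minor iteratively `r` times yields a
depth-`(3^r − 1)/2` minor of the original graph: if `H 0 = G` and each `H (k+1)` is a depth-1
minor of `H k`, then `H r` is a depth-`((3^r − 1)/2)` minor of `G`. -/
theorem stmt8 (r : ℕ) (W : ℕ → Type) [∀ k, Fintype (W k)]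
    (H : ∀ k, SimpleGraph (W k))
    (hstep : ∀ k < r, IsDepthMinor (H k) (H (k + 1)) 1) :
    IsDepthMinor (H 0) (H r) ((3 ^ r - 1) / 2) := by
  induction r with
  | zero => simpa using IsDepthMinor.refl (H 0)
  | succ n ih =>
    have h1 := ih (fun k hk => hstep k (Nat.lt_succ_of_lt hk))
    have h2 := hstep n (Nat.lt_succ_self n)
    have h3 := h1.comp h2
    have harith : (3 ^ (n+1) - 1) / 2 = 3 * ((3 ^ n - 1) / 2) + 1 := by
      obtain ⟨m, hm⟩ : Odd (3 ^ n) := Odd.pow (by decide)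
      rw [pow_succ]
      omega
    rwa [harith]
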